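/- Let R be a right-flat right-linear TRS and E a permutative theory. If R/E is non-terminating and there is no non-terminating R/E-derivation starting from a constant, then there is an infinite derivation t_0 →_{R∪E} t_1 →_{R∪E} … with infinitely many R-steps such that: (a) no infinite such derivation starts from a proper subterm of t_0; (b) no step in the derivation applies a collapsing rule at the root position; and (c) infinitely many steps occur at the root position. -/

import Mathlib

/-- First-order terms over function symbols `F` and variables `V`. -/
inductive Tm (F V : Type) : Type
  | var : V → Tm F V
  | app : F → List (Tm F V) → Tm F V

namespace Tm

variable {F V : Type}

/-- Height of a term: 0 for variables and constants. -/
def height : Tm F V → ℕ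
  | var _ => 0
  | app _ ts => ts.attach.foldr (fun t m => max (height t.1 + 1) m) 0
decreasing_by all_goals (simp_wf; have := List.sizeOf_lt_of_mem t.2; omega)

/-- Size (number of positions) of a term. -/
def size : Tm F V → ℕ
  | var _ => 1
  | app _ ts => 1 + (ts.attach.map (fun t => size t.1)).sum
decreasing_by all_goals (simp_wf; have := List.sizeOf_lt_of_mem t.2; omega)

/-- Apply a substitution. -/
def subst (σ : V → Tm F V) : Tm F V → Tm F V
  | var x => σ x
  | app f ts => app f (ts.attach.map (fun t => subst σ t.1))
decreasing_by all_goals (simp_wf; have := List.sizeOf_lt_of_mem t.2; omega)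

/-- List of variable occurrences. -/
def varList : Tm F V → List V
  | var x => [x]
  | app _ ts => (ts.attach.map (fun t => varList t.1)).flatten
decreasing_by all_goals (simp_wf; have := List.sizeOf_lt_of_mem t.2; omega)

/-- List of function-symbol occurrences. -/
def symList : Tm F V → List F
  | var _ => []
  | app f ts => f :: (ts.attach.map (fun t => symList t.1)).flatten
decreasing_by all_goals (simp_wf; have := List.sizeOf_lt_of_mem t.2; omega)

/-- The subterm at a position (positions are lists of argument indices). -/
def subAt : Tm F V → List ℕ → Option (Tm F V)
  | t, [] => some t
  | var _, _ :: _ => none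
  | app _ ts, i :: p => match ts[i]? with
      | some u => subAt u p
      | none => none

/-- Replace the subterm at a position. -/
def replAt : Tm F V → List ℕ → Tm F V → Option (Tm F V)
  | _, [], s => some s
  | var _, _ :: _, _ => none
  | app f ts, i :: p, s => match ts[i]? with
      | some u => (replAt u p s).map (fun u' => app f (ts.set i u'))
      | none => none

/-- `p` is a position of `t`. -/
def IsPos (t : Tm F V) (p : List ℕ) : Prop := (t.subAt p).isSome

/-- A term is a constant if it is a nullary function application. -/
def IsConst (t : Tm F V) : Prop := ∃ f : F, t = app f []

def Ground (t : Tm F V) : Prop := t.varList = []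

/-- A term is linear if each variable occurs at most once. -/
def Linear (t : Tm F V) : Prop := t.varList.Nodup

/-- A term is flat if its height is at most 1. -/
def Flat (t : Tm F V) : Prop := t.height ≤ 1

/-- A term is shallow if all variables occur at depth at most 1. -/
def Shallow (t : Tm F V) : Prop :=
  ∀ (p : List ℕ) (x : V), t.subAt p = some (var x) → p.length ≤ 1

end Tm

/-- A rewrite rule. -/
structure Rule (F V : Type) where
  lhs : Tm F V
  rhs : Tm F V

namespace Rule

variable {F V : Type}

/-- Standard well-formedness: the lhs is not a variable and variables of the
rhs occur in the lhs. -/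
def WF (r : Rule F V) : Prop :=
  (∀ x : V, r.lhs ≠ Tm.var x) ∧ ∀ x ∈ r.rhs.varList, x ∈ r.lhs.varList

def RightFlat (r : Rule F V) : Prop := r.rhs.Flat
def RightLinear (r : Rule F V) : Prop := r.rhs.Linear
def RightShallow (r : Rule F V) : Prop := r.rhs.Shallow
def FlatRule (r : Rule F V) : Prop := r.lhs.Flat ∧ r.rhs.Flat
def ShallowRule (r : Rule F V) : Prop := r.lhs.Shallow ∧ r.rhs.Shallow
def Collapsing (r : Rule F V) : Prop := ∃ x : V, r.rhs = Tm.var x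

/-- A permutative rule: linear, flat, height-preserving and variable-preserving. -/
def Permutative (r : Rule F V) : Prop :=
  r.WF ∧ r.lhs.Linear ∧ r.rhs.Linear ∧ r.lhs.Flat ∧ r.rhs.Flat ∧
    r.lhs.height = r.rhs.height ∧ ∀ x : V, x ∈ r.lhs.varList ↔ x ∈ r.rhs.varList

end Rule

/-- A permutative theory: a symmetric set of permutative rules. -/
def PermutativeTheory {F V : Type} (E : Set (Rule F V)) : Prop :=
  (∀ r ∈ E, r.Permutative) ∧ ∀ r ∈ E, (⟨r.rhs, r.lhs⟩ : Rule F V) ∈ E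

section Rewriting

variable {F V : Type}

/-- One rewrite step with rule `l → r` at position `p` using substitution `σ`. -/
def RewWith (l r : Tm F V) (p : List ℕ) (σ : V → Tm F V) (s t : Tm F V) : Prop :=
  s.subAt p = some (l.subst σ) ∧ s.replAt p (r.subst σ) = some t

/-- One rewrite step with TRS `R` at position `p`. -/
def RewAt (R : Set (Rule F V)) (p : List ℕ) (s t : Tm F V) : Prop :=
  ∃ r ∈ R, ∃ σ : V → Tm F V, RewWith r.lhs r.rhs p σ s t

/-- One rewrite step with TRS `R`. -/
def Rew (R : Set (Rule F V)) (s t : Tm F V) : Prop := ∃ p, RewAt R p s t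

/-- Reachability: reflexive-transitive closure of one-step rewriting. -/
def Reach (R : Set (Rule F V)) : Tm F V → Tm F V → Prop :=
  Relation.ReflTransGen (Rew R)

/-- One rewrite step with `R` modulo `E` : `s →E* · →R · →E* t`. -/
def RewMod (R E : Set (Rule F V)) (s t : Tm F V) : Prop :=
  ∃ u v, Reach E s u ∧ Rew R u v ∧ Reach E v t

/-- `R/E` is terminating from `s`. -/
def TerminatingFrom (R E : Set (Rule F V)) (s : Tm F V) : Prop :=
  ¬ ∃ f : ℕ → Tm F V, f 0 = s ∧ ∀ n, RewMod R E (f n) (f (n + 1))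

/-- `R/E` is terminating. -/
def Terminating (R E : Set (Rule F V)) : Prop :=
  ¬ ∃ f : ℕ → Tm F V, ∀ n, RewMod R E (f n) (f (n + 1))

/-- `t` is reachable from some constant. -/
def FromConst (R : Set (Rule F V)) (t : Tm F V) : Prop :=
  ∃ f : F, Reach R (Tm.app f []) t

/-- The measure `‖t‖`: number of positions of `t` whose subterm is not reachable
from a constant. -/
noncomputable def meas (R : Set (Rule F V)) (t : Tm F V) : ℕ :=
  Nat.card {p : List ℕ // ∃ u, t.subAt p = some u ∧ ¬ FromConst R u}

/-- `t` is a normal form w.r.t. `R/E`. -/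
def NFMod (R E : Set (Rule F V)) (t : Tm F V) : Prop := ¬ ∃ t', RewMod R E t t'

/-- `t` is `R`-irreducible. -/
def NF (R : Set (Rule F V)) (t : Tm F V) : Prop := ¬ ∃ t', Rew R t t'

/-- Innermost rewrite step with `R` (plain rewriting): all proper subterms of the
redex are irreducible. -/
def IRew (R : Set (Rule F V)) (s t : Tm F V) : Prop :=
  ∃ p, RewAt R p s t ∧
    ∀ (q : List ℕ) (w : Tm F V), q ≠ [] → s.subAt (p ++ q) = some w → NF R w

/-- Innermost rewrite step with `R` modulo `E`. -/
def IRewMod (R E : Set (Rule F V)) (s t : Tm F V) : Prop :=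
  ∃ u v, ∃ p : List ℕ, Reach E s u ∧ RewAt R p u v ∧ Reach E v t ∧
    ∀ (q : List ℕ) (w : Tm F V), q ≠ [] → u.subAt (p ++ q) = some w → NFMod R E w

/-- Innermost termination of `R/E`. -/
def ITerminating (R E : Set (Rule F V)) : Prop :=
  ¬ ∃ f : ℕ → Tm F V, ∀ n, IRewMod R E (f n) (f (n + 1))

end Rewriting

section Marking

variable {F V : Type}

/-- A derivation of length `n` with explicit rules, positions and substitutions. -/
def IsDeriv (R : Set (Rule F V)) (n : ℕ) (s : ℕ → Tm F V) (rl : ℕ → Rule F V)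
    (pp : ℕ → List ℕ) (sb : ℕ → V → Tm F V) : Prop :=
  ∀ i < n, rl i ∈ R ∧ RewWith (rl i).lhs (rl i).rhs (pp i) (sb i) (s i) (s (i + 1))

/-- `p'` is strictly below `p̄` : `p̄` is a proper prefix of `p'`. -/
def StrictBelow (pbar p : List ℕ) : Prop := ∃ q, q ≠ [] ∧ p = pbar ++ q

/-- A marking of a derivation. -/
def IsMarking (n : ℕ) (s : ℕ → Tm F V) (rl : ℕ → Rule F V)
    (pp : ℕ → List ℕ) (M : ℕ → List ℕ → Tm F V) : Prop :=
  (∀ p t, (s 0).subAt p = some t → M 0 p = t) ∧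
  ∀ i < n,
    (∀ p, (s (i + 1)).IsPos p → ¬ StrictBelow (pp i) p → M (i + 1) p = M i p) ∧
    (∀ (j : ℕ) (u : Tm F V), (rl i).rhs.subAt [j] = some u → u.IsConst →
        M (i + 1) (pp i ++ [j]) = u) ∧
    (∀ (j : ℕ) (p₁ : List ℕ) (x : V), (rl i).rhs.subAt [j] = some (Tm.var x) →
        (s (i + 1)).IsPos (pp i ++ j :: p₁) →
        ∃ q₀ : List ℕ, (rl i).lhs.subAt q₀ = some (Tm.var x) ∧
          M (i + 1) (pp i ++ j :: p₁) = M i (pp i ++ q₀ ++ p₁))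

end Marking

section WFSig

variable {F V : Type}

/-- Terms respecting the arity function. -/
inductive WFT (ar : F → ℕ) : Tm F V → Prop
  | var (x : V) : WFT ar (Tm.var x)
  | app (f : F) (ts : List (Tm F V)) : ts.length = ar f →
      (∀ t ∈ ts, WFT ar t) → WFT ar (Tm.app f ts)

end WFSig


namespace Tm
variable {F V : Type}

@[simp] theorem subAt_nil (t : Tm F V) : t.subAt [] = some t := by cases t <;> rfl

@[simp] theorem replAt_nil (t s : Tm F V) : t.replAt [] s = some s := by cases t <;> rfl

@[simp] theorem subAt_var_cons (x : V) (i : ℕ) (p : List ℕ) :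
    (var x : Tm F V).subAt (i :: p) = none := rfl

@[simp] theorem replAt_var_cons (x : V) (i : ℕ) (p : List ℕ) (s : Tm F V) :
    (var x : Tm F V).replAt (i :: p) s = none := rfl

theorem subAt_app_cons (f : F) (ts : List (Tm F V)) (i : ℕ) (p : List ℕ) :
    (app f ts).subAt (i :: p) = (ts[i]?).bind (fun u => u.subAt p) := by
  show (match ts[i]? with | some u => subAt u p | none => none) = _
  cases ts[i]? <;> rfl

theorem replAt_app_cons (f : F) (ts : List (Tm F V)) (i : ℕ) (p : List ℕ) (s : Tm F V) :
    (app f ts).replAt (i :: p) s =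
      (ts[i]?).bind (fun u => (u.replAt p s).map (fun u' => app f (ts.set i u'))) := by
  show (match ts[i]? with
    | some u => (replAt u p s).map (fun u' => app f (ts.set i u'))
    | none => none) = _
  cases ts[i]? <;> rfl

theorem subst_app (σ : V → Tm F V) (f : F) (ts : List (Tm F V)) :
    (app f ts).subst σ = app f (ts.map (subst σ)) := by
  rw [subst]
  congr 1
  simp [List.attach_map_val]

theorem varList_app (f : F) (ts : List (Tm F V)) :
    (app f ts).varList = (ts.map varList).flatten := by
  rw [varList]
  congr 1
  simp [List.attach_map_val]

theorem height_app (f : F) (ts : List (Tm F V)) :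
    (app f ts).height = (ts.map (fun t => height t + 1)).foldr max 0 := by
  rw [height]
  rw [show ts.attach.foldr (fun t m => max (height t.1 + 1) m) 0
      = (ts.attach.map (fun t => height t.1 + 1)).foldr max 0 by
    rw [List.foldr_map]]
  congr 1
  simp [List.attach_map_val]

theorem size_app (f : F) (ts : List (Tm F V)) :
    (app f ts).size = 1 + (ts.map size).sum := by
  rw [size]
  congr 2
  simp [List.attach_map_val]

theorem size_pos (t : Tm F V) : 1 ≤ t.size := by
  cases t with
  | var x => simp [size]
  | app f ts => rw [size_app]; omega

theorem subAt_append (q p : List ℕ) :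
    ∀ s : Tm F V, s.subAt (q ++ p) = (s.subAt q).bind (fun u => u.subAt p) := by
  induction q with
  | nil => intro s; simp
  | cons i q ih =>
    intro s
    cases s with
    | var x => simp
    | app f ts =>
      rw [List.cons_append, subAt_app_cons, subAt_app_cons]
      cases ts[i]? with
      | none => rfl
      | some u => simp [ih u]

theorem exists_replAt (v : Tm F V) :
    ∀ (q : List ℕ) (s u : Tm F V), s.subAt q = some u → ∃ s', s.replAt q v = some s' := by
  intro q
  induction q with
  | nil => intro s u _; exact ⟨v, by simp⟩
  | cons i q ih =>
    intro s u h
    cases s with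
    | var x => simp at h
    | app f ts =>
      rw [subAt_app_cons] at h
      rw [replAt_app_cons]
      cases hg : ts[i]? with
      | none => rw [hg] at h; simp at h
      | some w =>
        rw [hg] at h; simp only [Option.bind_some] at h
        obtain ⟨s', hs'⟩ := ih w u h
        exact ⟨app f (ts.set i s'), by simp [hs']⟩

theorem subAt_replAt :
    ∀ (q : List ℕ) (s s' v : Tm F V), s.replAt q v = some s' → s'.subAt q = some v := by
  intro q
  induction q with
  | nil => intro s s' v h; simp at h; simp [h]
  | cons i q ih =>
    intro s s' v h
    cases s with
    | var x => simp at h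
    | app f ts =>
      rw [replAt_app_cons] at h
      cases hg : ts[i]? with
      | none => rw [hg] at h; simp at h
      | some w =>
        rw [hg] at h; simp only [Option.bind_some, Option.map_eq_some_iff] at h
        obtain ⟨u', hu', hs'⟩ := h
        subst hs'
        rw [subAt_app_cons]
        have hlen : i < ts.length := by
          by_contra hc
          rw [List.getElem?_eq_none (by omega)] at hg; simp at hg
        rw [List.getElem?_set_self hlen]
        simpa using ih w u' v hu'

theorem replAt_append (w : Tm F V) :
    ∀ (q p : List ℕ) (s u : Tm F V), s.subAt q = some u →
      s.replAt (q ++ p) w = (u.replAt p w).bind (fun u' => s.replAt q u') := by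
  intro q
  induction q with
  | nil =>
    intro p s u h
    simp at h; subst h; simp
  | cons i q ih =>
    intro p s u h
    cases s with
    | var x => simp at h
    | app f ts =>
      rw [subAt_app_cons] at h
      rw [List.cons_append, replAt_app_cons]
      cases hg : ts[i]? with
      | none => rw [hg] at h; simp at h
      | some v =>
        rw [hg] at h; simp only [Option.bind_some] at h
        simp only [Option.bind_some]
        rw [ih p v u h]
        cases u.replAt p w with
        | none => simp
        | some u' =>
          simp only [Option.bind_some]
          rw [replAt_app_cons, hg]
          simp

theorem subAt_disjoint (w : Tm F V) :
    ∀ (p q : List ℕ) (s t : Tm F V), s.replAt p w = some t →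
      ¬ p <+: q → ¬ q <+: p → t.subAt q = s.subAt q := by
  intro p
  induction p with
  | nil => intro q s t _ hpq _; exact absurd (List.nil_prefix) hpq
  | cons i p ih =>
    intro q s t hrep hpq hqp
    cases q with
    | nil => exact absurd (List.nil_prefix) hqp
    | cons j q' =>
      cases s with
      | var x => simp at hrep
      | app f ts =>
        rw [replAt_app_cons] at hrep
        cases hg : ts[i]? with
        | none => rw [hg] at hrep; simp at hrep
        | some u =>
          rw [hg] at hrep
          simp only [Option.bind_some, Option.map_eq_some_iff] at hrep
          obtain ⟨u', hu', ht⟩ := hrep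
          subst ht
          rw [subAt_app_cons, subAt_app_cons]
          by_cases hij : i = j
          · subst hij
            have hlen : i < ts.length := by
              by_contra hc
              rw [List.getElem?_eq_none (by omega)] at hg; simp at hg
            rw [List.getElem?_set_self hlen, hg]
            have h1 : ¬ p <+: q' := fun hc => hpq (by simpa [List.cons_prefix_cons] using hc)
            have h2 : ¬ q' <+: p := fun hc => hqp (by simpa [List.cons_prefix_cons] using hc)
            simpa using ih q' u u' hu' h1 h2
          · rw [List.getElem?_set_ne hij]

theorem subAt_subst (σ : V → Tm F V) :
    ∀ (p : List ℕ) (t u : Tm F V), t.subAt p = some u →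
      (t.subst σ).subAt p = some (u.subst σ) := by
  intro p
  induction p with
  | nil => intro t u h; simp at h; simp [h]
  | cons i p ih =>
    intro t u h
    cases t with
    | var x => simp at h
    | app f ts =>
      rw [subAt_app_cons] at h
      rw [subst_app, subAt_app_cons, List.getElem?_map]
      cases hg : ts[i]? with
      | none => rw [hg] at h; simp at h
      | some w =>
        rw [hg] at h; simp only [Option.bind_some] at h
        simp only [Option.map_some, Option.bind_some]
        exact ih w u h

theorem exists_pos_of_mem_varList {x : V} :
    ∀ (t : Tm F V), x ∈ t.varList → ∃ p, t.subAt p = some (Tm.var x)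
  | var y, h => by
      rw [varList] at h
      simp at h
      exact ⟨[], by simp [h]⟩
  | app f ts, h => by
      rw [varList_app] at h
      simp only [List.mem_flatten, List.mem_map] at h
      obtain ⟨_, ⟨s, hs, rfl⟩, hx⟩ := h
      obtain ⟨p, hp⟩ := exists_pos_of_mem_varList s hx
      obtain ⟨i, hi⟩ := List.getElem?_of_mem hs
      exact ⟨i :: p, by rw [subAt_app_cons, hi,
        Option.bind_some, hp]⟩
  termination_by t => sizeOf t
  decreasing_by simp_wf; have := List.sizeOf_lt_of_mem hs; omega

theorem height_eq_zero {t : Tm F V} (h : t.height = 0) :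
    (∃ x, t = var x) ∨ ∃ c, t = app c [] := by
  cases t with
  | var x => exact Or.inl ⟨x, rfl⟩
  | app f ts =>
    cases ts with
    | nil => exact Or.inr ⟨f, rfl⟩
    | cons a l =>
      rw [height_app] at h
      simp [List.foldr_cons] at h

theorem height_app_le_one {f : F} {ts : List (Tm F V)} (h : (app f ts).height ≤ 1) :
    ∀ t ∈ ts, t.height = 0 := by
  rw [height_app] at h
  intro t ht
  induction ts with
  | nil => simp at ht
  | cons a l ih =>
    simp only [List.map_cons, List.foldr_cons, max_le_iff] at h
    rcases List.mem_cons.1 ht with rfl | ht'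
    · omega
    · exact ih h.2 ht'

theorem size_le_of_subAt :
    ∀ (q : List ℕ) (t u : Tm F V), t.subAt q = some u → u.size ≤ t.size := by
  intro q
  induction q with
  | nil => intro t u h; simp at h; rw [h]
  | cons i q ih =>
    intro t u h
    cases t with
    | var x => simp at h
    | app f ts =>
      rw [subAt_app_cons] at h
      cases hg : ts[i]? with
      | none => rw [hg] at h; simp at h
      | some w =>
        rw [hg] at h; simp only [Option.bind_some] at h
        have h1 : u.size ≤ w.size := ih w u h
        have hw : w ∈ ts := List.mem_of_getElem? hg
        have h2 : w.size ≤ (ts.map size).sum :=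
          List.single_le_sum (by intro y hy; omega) _ (List.mem_map_of_mem (f := size) hw)
        rw [size_app]; omega

theorem size_lt_of_subAt {q : List ℕ} {t u : Tm F V} (h : t.subAt q = some u)
    (hq : q ≠ []) : u.size < t.size := by
  cases q with
  | nil => exact absurd rfl hq
  | cons i q =>
    cases t with
    | var x => simp at h
    | app f ts =>
      rw [subAt_app_cons] at h
      cases hg : ts[i]? with
      | none => rw [hg] at h; simp at h
      | some w =>
        rw [hg] at h; simp only [Option.bind_some] at h
        have h1 : u.size ≤ w.size := size_le_of_subAt q w u h
        have hw : w ∈ ts := List.mem_of_getElem? hg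
        have h2 : w.size ≤ (ts.map size).sum :=
          List.single_le_sum (by intro y hy; omega) _ (List.mem_map_of_mem (f := size) hw)
        rw [size_app]; omega

end Tm

section Core
attribute [local instance] Classical.propDecidable
variable {F V : Type} {R E X : Set (Rule F V)}

/-- Non-termination from a term. -/
def NT (R E : Set (Rule F V)) (t : Tm F V) : Prop :=
  ∃ f : ℕ → Tm F V, f 0 = t ∧ ∀ n, RewMod R E (f n) (f (n + 1))

theorem nt_iff {t : Tm F V} : NT R E t ↔ ¬ TerminatingFrom R E t := by
  unfold NT TerminatingFrom
  exact not_not.symm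

theorem NT.prepend {s t : Tm F V} (h : RewMod R E s t) (hnt : NT R E t) : NT R E s := by
  obtain ⟨f, h0, hs⟩ := hnt
  refine ⟨fun n => match n with | 0 => s | n + 1 => f n, rfl, fun n => ?_⟩
  match n with
  | 0 => simpa [h0] using h
  | n + 1 => exact hs n

theorem NT.back {s t : Tm F V} (h : Rew R s t ∨ Rew E s t) (hnt : NT R E t) :
    NT R E s := by
  rcases h with h | h
  · exact NT.prepend ⟨s, t, Relation.ReflTransGen.refl, h, Relation.ReflTransGen.refl⟩ hnt
  · obtain ⟨f, h0, hs⟩ := hnt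
    refine ⟨fun n => match n with | 0 => s | n + 1 => f (n + 1), rfl, fun n => ?_⟩
    match n with
    | 0 =>
      obtain ⟨u, v, hr1, hr2, hr3⟩ := hs 0
      exact ⟨u, v, Relation.ReflTransGen.head h (h0 ▸ hr1), hr2, hr3⟩
    | n + 1 => exact hs (n + 1)

theorem rew_lift {u v s : Tm F V} {q : List ℕ} (h : Rew X u v)
    (hsub : s.subAt q = some u) : ∃ s', Rew X s s' ∧ s'.subAt q = some v := by
  obtain ⟨p, r, hr, σ, h1, h2⟩ := h
  obtain ⟨s', hs'⟩ := Tm.exists_replAt v q s u hsub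
  refine ⟨s', ⟨q ++ p, r, hr, σ, ?_, ?_⟩, Tm.subAt_replAt q s s' v hs'⟩
  · rw [Tm.subAt_append, hsub, Option.bind_some, h1]
  · rw [Tm.replAt_append _ q p s u hsub, h2, Option.bind_some, hs']

theorem reach_lift {u v s : Tm F V} {q : List ℕ} (h : Reach X u v)
    (hsub : s.subAt q = some u) : ∃ s', Reach X s s' ∧ s'.subAt q = some v := by
  induction h with
  | refl => exact ⟨s, Relation.ReflTransGen.refl, hsub⟩
  | tail _ hstep ih =>
    obtain ⟨s', hr, hsub'⟩ := ih
    obtain ⟨s'', hr', hsub''⟩ := rew_lift hstep hsub'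
    exact ⟨s'', Relation.ReflTransGen.tail hr hr', hsub''⟩

theorem rewmod_lift {u v s : Tm F V} {q : List ℕ} (h : RewMod R E u v)
    (hsub : s.subAt q = some u) : ∃ s', RewMod R E s s' ∧ s'.subAt q = some v := by
  obtain ⟨a, b, h1, h2, h3⟩ := h
  obtain ⟨s1, hr1, hsub1⟩ := reach_lift h1 hsub
  obtain ⟨s2, hr2, hsub2⟩ := rew_lift h2 hsub1
  obtain ⟨s3, hr3, hsub3⟩ := reach_lift h3 hsub2
  exact ⟨s3, ⟨s1, s2, hr1, hr2, hr3⟩, hsub3⟩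

theorem NT.subterm {s u : Tm F V} {q : List ℕ} (hsub : s.subAt q = some u)
    (hnt : NT R E u) : NT R E s := by
  obtain ⟨f, h0, hs⟩ := hnt
  subst h0
  let S : ∀ n : ℕ, {x : Tm F V // x.subAt q = some (f n)} := fun n =>
    Nat.rec ⟨s, hsub⟩
      (fun k prev =>
        ⟨(rewmod_lift (hs k) prev.2).choose,
         (rewmod_lift (hs k) prev.2).choose_spec.2⟩) n
  exact ⟨fun n => (S n).1, rfl, fun n => (rewmod_lift (hs n) (S n).2).choose_spec.1⟩

theorem conv2 (g : ℕ → Tm F V)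
    (H : ∀ n, g (n + 1) = g n ∨ Rew E (g n) (g (n + 1)) ∨ Rew R (g n) (g (n + 1)))
    (HR : ∀ N, ∃ n ≥ N, Rew R (g n) (g (n + 1))) : NT R E (g 0) := by
  have hfind : ∀ a : ℕ, ∃ n, a ≤ n ∧ Rew R (g n) (g (n + 1)) := by
    intro a; obtain ⟨n, hn, h⟩ := HR a; exact ⟨n, hn, h⟩
  have hreach : ∀ (a k : ℕ), (∀ i, a ≤ i → i < a + k → ¬ Rew R (g i) (g (i + 1))) →
      Reach E (g a) (g (a + k)) := by
    intro a k
    induction k with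
    | zero => intro _; exact Relation.ReflTransGen.refl
    | succ k ih =>
      intro hi
      have h1 : Reach E (g a) (g (a + k)) := ih (fun i h1 h2 => hi i h1 (by omega))
      rcases H (a + k) with he | he | he
      · rw [show a + (k+1) = a + k + 1 by omega, he]; exact h1
      · exact Relation.ReflTransGen.tail h1 (by rw [show a + (k+1) = a + k + 1 by omega]; exact he)
      · exact absurd he (hi (a + k) (by omega) (by omega))
  have hblock : ∀ a : ℕ, RewMod R E (g a) (g (Nat.find (hfind a) + 1)) := by
    intro a
    set n := Nat.find (hfind a) with hn
    have hspec := Nat.find_spec (hfind a)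
    have hmin : ∀ m, m < n → ¬(a ≤ m ∧ Rew R (g m) (g (m + 1))) := fun m hm =>
      Nat.find_min (hfind a) (by rw [← hn] at *; exact hm)
    have hge : a ≤ n := hspec.1
    refine ⟨g n, g (n + 1), ?_, hspec.2, Relation.ReflTransGen.refl⟩
    have := hreach a (n - a) (fun i h1 h2 => by
      intro hr
      exact hmin i (by omega) ⟨h1, hr⟩)
    rwa [show a + (n - a) = n by omega] at this
  let m : ℕ → ℕ := fun k => Nat.rec 0 (fun _ prev => Nat.find (hfind prev) + 1) k
  exact ⟨fun k => g (m k), rfl, fun k => hblock (m k)⟩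

theorem rew_of_rewWith {r : Rule F V} {p σ s t} (hr : r ∈ X)
    (h : RewWith r.lhs r.rhs p σ s t) : Rew X s t := ⟨p, r, hr, σ, h⟩

theorem term_forward {r : Rule F V} {p σ a b} (hr : r ∈ R ∪ E)
    (h : RewWith r.lhs r.rhs p σ a b) (ha : TerminatingFrom R E a) :
    TerminatingFrom R E b := by
  intro hb
  have hntb : NT R E b := hb
  refine ha (NT.back ?_ hntb)
  rcases hr with hr | hr
  · exact Or.inl (rew_of_rewWith hr h)
  · exact Or.inr (rew_of_rewWith hr h)

end Core

namespace Tm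
variable {F V : Type}
theorem subst_var (σ : V → Tm F V) (x : V) : (var x).subst σ = σ x := by rw [subst]
theorem varList_var (x : V) : (var x : Tm F V).varList = [x] := by rw [varList]
end Tm

section Main
attribute [local instance] Classical.propDecidable
variable {F V : Type} {R E : Set (Rule F V)}

def PST (R E : Set (Rule F V)) (t : Tm F V) : Prop :=
  ∀ (q : List ℕ) (u : Tm F V), q ≠ [] → t.subAt q = some u → TerminatingFrom R E u

theorem subterm_pos {l : Tm F V} {x : V} (hnl : ∀ y, l ≠ Tm.var y)
    (hx : x ∈ l.varList) (σ : V → Tm F V) :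
    ∃ q₀, q₀ ≠ [] ∧ (l.subst σ).subAt q₀ = some (σ x) := by
  obtain ⟨q₀, hq₀⟩ := Tm.exists_pos_of_mem_varList l hx
  have hne : q₀ ≠ [] := by
    intro h; subst h; simp at hq₀; exact hnl x hq₀
  have := Tm.subAt_subst σ q₀ l _ hq₀
  rw [Tm.subst_var] at this
  exact ⟨q₀, hne, this⟩

theorem rhs_sub {l r : Tm F V} (hflat : r.Flat) (hv : ∀ x ∈ r.varList, x ∈ l.varList)
    (hnl : ∀ y, l ≠ Tm.var y) (σ : V → Tm F V) {q : List ℕ} {u : Tm F V} (hq : q ≠ [])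
    (h : (r.subst σ).subAt q = some u) :
    (∃ q', q' ≠ [] ∧ (l.subst σ).subAt q' = some u) ∨ ∃ c : F, u = Tm.app c [] := by
  cases r with
  | var x =>
    rw [Tm.subst_var] at h
    obtain ⟨q₀, hne, hq₀⟩ := subterm_pos hnl (hv x (by rw [Tm.varList_var]; simp)) σ
    left
    refine ⟨q₀ ++ q, by simp [hne], ?_⟩
    rw [Tm.subAt_append, hq₀, Option.bind_some, h]
  | app g as =>
    cases q with
    | nil => exact absurd rfl hq
    | cons j q' =>
      rw [Tm.subst_app, Tm.subAt_app_cons, List.getElem?_map] at h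
      cases hg : as[j]? with
      | none => rw [hg] at h; simp at h
      | some a =>
        rw [hg] at h; simp only [Option.map_some, Option.bind_some] at h
        have ha0 : a.height = 0 := Tm.height_app_le_one hflat a (List.mem_of_getElem? hg)
        rcases Tm.height_eq_zero ha0 with ⟨x, rfl⟩ | ⟨c, rfl⟩
        · have hx : x ∈ (Tm.app g as).varList := by
            rw [Tm.varList_app]
            simp only [List.mem_flatten, List.mem_map]
            exact ⟨_, ⟨_, List.mem_of_getElem? hg, rfl⟩, by rw [Tm.varList_var]; simp⟩
          obtain ⟨q₀, hne, hq₀⟩ := subterm_pos hnl (hv x hx) σ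
          rw [Tm.subst_var] at h
          left
          exact ⟨q₀ ++ q', by simp [hne], by rw [Tm.subAt_append, hq₀, Option.bind_some, h]⟩
        · rw [Tm.subst_app] at h
          simp only [List.map_nil] at h
          cases q' with
          | nil => right; exact ⟨c, by simpa using h.symm⟩
          | cons i q'' => rw [Tm.subAt_app_cons] at h; simp at h

theorem pst_preserved (hconst : ∀ c : F, TerminatingFrom R E (Tm.app c []))
    {r : Rule F V} (hr : r ∈ R ∪ E) (hnl : ∀ y, r.lhs ≠ Tm.var y)
    (hv : ∀ x ∈ r.rhs.varList, x ∈ r.lhs.varList) (hflat : r.rhs.Flat)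
    {p : List ℕ} {σ : V → Tm F V} {s t : Tm F V}
    (hstep : RewWith r.lhs r.rhs p σ s t) (hs : PST R E s) : PST R E t := by
  obtain ⟨hsub, hrep⟩ := hstep
  intro q u hq hqsub
  by_cases h1 : q <+: p
  · obtain ⟨p₂, rfl⟩ := h1
    have hsq : ∃ sq, s.subAt q = some sq := by
      rw [Tm.subAt_append] at hsub
      cases hx : s.subAt q
      · rw [hx] at hsub; simp at hsub
      · exact ⟨_, rfl⟩
    obtain ⟨sq, hsq⟩ := hsq
    have hls : sq.subAt p₂ = some (r.lhs.subst σ) := by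
      rw [Tm.subAt_append, hsq, Option.bind_some] at hsub; exact hsub
    have hrepq := Tm.replAt_append (r.rhs.subst σ) q p₂ s sq hsq
    rw [hrep] at hrepq
    have hto : ∃ tq, sq.replAt p₂ (r.rhs.subst σ) = some tq ∧ s.replAt q tq = some t := by
      cases hx : sq.replAt p₂ (r.rhs.subst σ)
      · rw [hx] at hrepq; simp at hrepq
      · rw [hx, Option.bind_some] at hrepq; exact ⟨_, rfl, hrepq.symm⟩
    obtain ⟨tq, htq1, htq2⟩ := hto
    have hu : u = tq := by
      have := Tm.subAt_replAt q s t tq htq2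
      rw [hqsub] at this
      exact Option.some_inj.1 this
    subst hu
    exact term_forward hr ⟨hls, htq1⟩ (hs q sq hq hsq)
  · by_cases h2 : p <+: q
    · obtain ⟨q₂, rfl⟩ := h2
      have htp : t.subAt p = some (r.rhs.subst σ) := Tm.subAt_replAt p s t _ hrep
      have hu2 : (r.rhs.subst σ).subAt q₂ = some u := by
        rw [Tm.subAt_append, htp, Option.bind_some] at hqsub; exact hqsub
      cases q₂ with
      | nil =>
        simp at hu2
        have hp : p ≠ [] := by simpa using hq
        exact hu2 ▸ term_forward hr (p := []) (σ := σ)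
          ⟨by simp, by simp⟩ (hs p _ hp hsub)
      | cons j q₃ =>
        rcases rhs_sub hflat hv hnl σ (by simp) hu2 with ⟨q'', hne, hq''⟩ | ⟨c, rfl⟩
        · refine hs (p ++ q'') _ (by simp [hne]) ?_
          rw [Tm.subAt_append, hsub, Option.bind_some, hq'']
        · exact hconst c
    · rw [Tm.subAt_disjoint _ p q s t hrep h2 h1] at hqsub
      exact hs q u hq hqsub

end Main

section Flatten
attribute [local instance] Classical.propDecidable
variable {F V : Type}

abbrev Rec (F V : Type) := Rule F V × List ℕ × (V → Tm F V)

def Chain : Tm F V → List (Rec F V) → Tm F V → Prop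
  | s, [], t => s = t
  | s, y :: L, t => ∃ s', RewWith y.1.lhs y.1.rhs y.2.1 y.2.2 s s' ∧ Chain s' L t

theorem chain_append {s t w : Tm F V} :
    ∀ {L L' : List (Rec F V)}, Chain s L t → Chain t L' w → Chain s (L ++ L') w := by
  intro L
  induction L generalizing s with
  | nil => intro L' h1 h2; cases h1; exact h2
  | cons y L ih =>
    intro L' h1 h2
    obtain ⟨s', hw, hch⟩ := h1
    exact ⟨s', hw, ih hch h2⟩

theorem chain_of_reach {X : Set (Rule F V)} {s t : Tm F V} (h : Reach X s t) :
    ∃ L, Chain s L t ∧ ∀ y ∈ L, y.1 ∈ X := by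
  induction h with
  | refl => exact ⟨[], rfl, by simp⟩
  | tail _ hstep ih =>
    obtain ⟨L, hch, hmem⟩ := ih
    obtain ⟨p, r, hr, σ, hw⟩ := hstep
    refine ⟨L ++ [(r, p, σ)], chain_append hch ⟨_, hw, rfl⟩, ?_⟩
    intro y hy
    rcases List.mem_append.1 hy with hy | hy
    · exact hmem y hy
    · simp at hy; subst hy; exact hr

variable {R E : Set (Rule F V)} (a : ℕ → Tm F V) (La : ℕ → List (Rec F V))
variable (hne : ∀ n, La n ≠ [])
variable (hch : ∀ n, Chain (a n) (La n) (a (n + 1)))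
variable (hmem : ∀ n, ∀ y ∈ La n, y.1 ∈ R ∪ E)
variable (hlast : ∀ n z, (La n).getLast? = some z → z.1 ∈ R)

def FlSt (a : ℕ → Tm F V) : Type :=
  {x : ℕ × List (Rec F V) × Tm F V //
    x.2.1 ≠ [] ∧ Chain x.2.2 x.2.1 (a (x.1 + 1)) ∧ (∀ y ∈ x.2.1, y.1 ∈ R ∪ E) ∧
      (∀ z, (x.2.1).getLast? = some z → z.1 ∈ R)}

noncomputable def flNext (x : FlSt (R := R) (E := E) a) : FlSt (R := R) (E := E) a :=
  match x with
  | ⟨(_, [], _), hinv⟩ => absurd rfl hinv.1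
  | ⟨(k, [y], cur), hinv⟩ =>
    have h : ∃ s', RewWith y.1.lhs y.1.rhs y.2.1 y.2.2 cur s' ∧
        Chain s' [] (a (k + 1)) := hinv.2.1
    ⟨(k + 1, La (k + 1), Classical.choose h), by
      refine ⟨hne (k + 1), ?_, hmem (k + 1), hlast (k + 1)⟩
      have h2 : Classical.choose h = a (k + 1) := (Classical.choose_spec h).2
      show Chain (Classical.choose h) (La (k + 1)) (a (k + 1 + 1))
      rw [h2]
      exact hch (k + 1)⟩
  | ⟨(k, y :: b :: l, cur), hinv⟩ =>
    have h : ∃ s', RewWith y.1.lhs y.1.rhs y.2.1 y.2.2 cur s' ∧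
        Chain s' (b :: l) (a (k + 1)) := hinv.2.1
    ⟨(k, b :: l, Classical.choose h), by
      refine ⟨by simp, (Classical.choose_spec h).2, ?_, ?_⟩
      · exact fun y' hy' => hinv.2.2.1 y' (List.mem_cons_of_mem _ hy')
      · intro z hz
        refine hinv.2.2.2 z ?_
        rw [List.getLast?_cons_cons]
        exact hz⟩

theorem flNext_spec (x : FlSt (R := R) (E := E) a) :
    ∃ (y : Rec F V) (rest : List (Rec F V)), x.1.2.1 = y :: rest ∧
      RewWith y.1.lhs y.1.rhs y.2.1 y.2.2 x.1.2.2
        ((flNext a La hne hch hmem hlast x).1.2.2) ∧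
      ((rest = [] ∧ (flNext a La hne hch hmem hlast x).1.1 = x.1.1 + 1 ∧
          (flNext a La hne hch hmem hlast x).1.2.1 = La (x.1.1 + 1)) ∨
       (rest ≠ [] ∧ (flNext a La hne hch hmem hlast x).1.1 = x.1.1 ∧
          (flNext a La hne hch hmem hlast x).1.2.1 = rest)) := by
  obtain ⟨⟨k, suf, cur⟩, hinv⟩ := x
  match suf, hinv with
  | [], hinv => exact absurd rfl hinv.1
  | [y], hinv =>
    have h : ∃ s', RewWith y.1.lhs y.1.rhs y.2.1 y.2.2 cur s' ∧
        Chain s' [] (a (k + 1)) := hinv.2.1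
    exact ⟨y, [], rfl, (Classical.choose_spec h).1, Or.inl ⟨rfl, rfl, rfl⟩⟩
  | y :: b :: l, hinv =>
    have h : ∃ s', RewWith y.1.lhs y.1.rhs y.2.1 y.2.2 cur s' ∧
        Chain s' (b :: l) (a (k + 1)) := hinv.2.1
    exact ⟨y, b :: l, rfl, (Classical.choose_spec h).1, Or.inr ⟨by simp, rfl, rfl⟩⟩

include a La hne hch hmem hlast in
theorem flatten_deriv :
    ∃ (f : ℕ → Tm F V) (rl : ℕ → Rule F V) (pp : ℕ → List ℕ) (sb : ℕ → V → Tm F V),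
      f 0 = a 0 ∧
      (∀ n, rl n ∈ R ∪ E ∧ RewWith (rl n).lhs (rl n).rhs (pp n) (sb n) (f n) (f (n + 1))) ∧
      (∀ N, ∃ n ≥ N, rl n ∈ R) := by
  set nx := flNext a La hne hch hmem hlast with hnx
  let st : ℕ → FlSt (R := R) (E := E) a := fun n => Nat.rec
    ⟨(0, La 0, a 0), hne 0, hch 0, hmem 0, hlast 0⟩ (fun _ p => nx p) n
  have hst : ∀ n, st (n + 1) = nx (st n) := fun n => rfl
  have hspec := fun n => flNext_spec a La hne hch hmem hlast (st n)
  choose y rest hsuf hrw hbr using hspec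
  refine ⟨fun n => (st n).1.2.2, fun n => (y n).1, fun n => (y n).2.1,
    fun n => (y n).2.2, rfl, fun n => ?_, ?_⟩
  · constructor
    · exact (st n).2.2.2.1 (y n) (by rw [hsuf n]; simp)
    · have h := hrw n
      rw [← hnx] at h
      rw [← hst n] at h
      exact h
  · have key : ∀ m n, (st n).1.2.1.length = m + 1 → (y (n + m)).1 ∈ R := by
      intro m
      induction m with
      | zero =>
        intro n hlen
        have h1 := hsuf n
        have h2 : rest n = [] := by
          have h3 := congrArg List.length h1
          rw [hlen] at h3; simpa using h3
        apply (st n).2.2.2.2 (y n)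
        rw [h1, h2]; rfl
      | succ m ih =>
        intro n hlen
        have h1 := hsuf n
        have hrne : rest n ≠ [] := by
          intro hc
          have h3 := congrArg List.length h1
          rw [hlen, hc] at h3; simp at h3
        rcases hbr n with ⟨hc, _⟩ | ⟨_, _, hsufn⟩
        · exact absurd hc hrne
        · rw [← hnx, ← hst n] at hsufn
          have hlen' : (st (n + 1)).1.2.1.length = m + 1 := by
            rw [hsufn]
            have h3 := congrArg List.length h1
            rw [hlen] at h3; simp at h3; omega
          have := ih (n + 1) hlen'
          rwa [show n + 1 + m = n + (m + 1) by omega] at this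
    intro N
    have hL : 1 ≤ (st N).1.2.1.length :=
      List.length_pos_iff.2 ((st N).2.1)
    refine ⟨N + ((st N).1.2.1.length - 1), by omega, ?_⟩
    exact key _ N (by omega)

end Flatten

section Assemble
attribute [local instance] Classical.propDecidable
variable {F V : Type} {R E : Set (Rule F V)}

theorem exists_min_nt (h : ¬ Terminating R E) :
    ∃ t : Tm F V, NT R E t ∧ PST R E t := by
  rw [Terminating, not_not] at h
  obtain ⟨f, hf⟩ := h
  have h0 : NT R E (f 0) := ⟨f, rfl, hf⟩
  suffices H : ∀ (n : ℕ) (t : Tm F V), t.size ≤ n → NT R E t →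
      ∃ t', NT R E t' ∧ PST R E t' from H _ (f 0) le_rfl h0
  intro n
  induction n with
  | zero => intro t ht _; have := Tm.size_pos t; omega
  | succ n ih =>
    intro t ht hnt
    by_cases hp : PST R E t
    · exact ⟨t, hnt, hp⟩
    · rw [PST] at hp; push_neg at hp
      obtain ⟨q, u, hq, hsub, hu⟩ := hp
      have hntu : NT R E u := nt_iff.2 hu
      have hlt := Tm.size_lt_of_subAt hsub hq
      exact ih u (by omega) hntu

theorem inf_pigeonhole (Q : ℕ → Prop) (idx : ℕ → ℕ) (L : ℕ)
    (h1 : ∀ n, Q n → idx n < L) (h2 : ∀ M, ∃ n ≥ M, Q n) :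
    ∃ j < L, ∀ M, ∃ n ≥ M, Q n ∧ idx n = j := by
  by_contra hc
  push_neg at hc
  choose M hM using hc
  set B := (Finset.range L).sup (fun j => if h : j < L then M j h else 0) with hB
  obtain ⟨n, hn, hQ⟩ := h2 B
  have hj := h1 n hQ
  have hle : M (idx n) hj ≤ B := by
    have h3 := Finset.le_sup (f := fun j => if h : j < L then M j h else 0)
      (Finset.mem_range.2 hj)
    have h4 : (fun j => if h : j < L then M j h else 0) (idx n) = M (idx n) hj := by
      simp [hj]
    rw [dif_pos hj] at h3
    exact h3
  exact hM (idx n) hj n (by omega) hQ rfl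

theorem rewWith_shape {l r : Tm F V} {j : ℕ} {p' : List ℕ} {σ : V → Tm F V} {s t : Tm F V}
    (h : RewWith l r (j :: p') σ s t) :
    ∃ (g : F) (ts : List (Tm F V)) (w w' : Tm F V), s = Tm.app g ts ∧ ts[j]? = some w ∧
      RewWith l r p' σ w w' ∧ t = Tm.app g (ts.set j w') := by
  obtain ⟨hsub, hrep⟩ := h
  cases s with
  | var x => simp at hsub
  | app g ts =>
    rw [Tm.subAt_app_cons] at hsub
    rw [Tm.replAt_app_cons] at hrep
    cases hg : ts[j]? with
    | none => rw [hg] at hsub; simp at hsub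
    | some w =>
      rw [hg] at hsub hrep
      simp only [Option.bind_some] at hsub hrep
      cases hw : w.replAt p' (r.subst σ) with
      | none => rw [hw] at hrep; simp at hrep
      | some w' =>
        rw [hw] at hrep; simp only [Option.map_some] at hrep
        exact ⟨g, ts, w, w', rfl, hg, ⟨hsub, hw⟩, (Option.some_inj.1 hrep).symm⟩

end Assemble

/-- If `R/E` is non-terminating (with `R` right-flat right-linear, `E`
permutative) and no non-terminating `R/E`-derivation starts from a constant, then there
is an infinite `R ∪ E`-derivation with infinitely many `R`-steps such that
(a) no infinite `R/E`-derivation starts from a proper subterm of `t₀`,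
(b) no collapsing rule is applied at the root, and
(c) infinitely many steps occur at the root. -/
theorem stmt10 {F V : Type} (R E : Set (Rule F V))
    (hR : ∀ r ∈ R, r.RightFlat ∧ r.RightLinear) (hRwf : ∀ r ∈ R, r.WF)
    (hE : PermutativeTheory E)
    (hnt : ¬ Terminating R E)
    (hconst : ∀ c : F, TerminatingFrom R E (Tm.app c [])) :
    ∃ (f : ℕ → Tm F V) (rl : ℕ → Rule F V) (pp : ℕ → List ℕ) (sb : ℕ → V → Tm F V),
      (∀ n, rl n ∈ R ∪ E ∧ RewWith (rl n).lhs (rl n).rhs (pp n) (sb n) (f n) (f (n + 1))) ∧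
      (∀ N, ∃ n ≥ N, rl n ∈ R) ∧
      (∀ (q : List ℕ) (u : Tm F V), q ≠ [] → (f 0).subAt q = some u →
        TerminatingFrom R E u) ∧
      (∀ n, pp n = [] → ¬ (rl n).Collapsing) ∧
      (∀ N, ∃ n ≥ N, pp n = []) := by
  classical
  obtain ⟨t₀, hnt₀, hpst₀⟩ := exists_min_nt hnt
  obtain ⟨g, hg0, hgs⟩ := hnt₀
  choose u v h1 h2 h3 using hgs
  set a : ℕ → Tm F V := fun n => match n with | 0 => g 0 | n + 1 => v n with ha
  have hblk : ∀ n, ∃ L : List (Rec F V), L ≠ [] ∧ Chain (a n) L (a (n + 1)) ∧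
      (∀ y ∈ L, y.1 ∈ R ∪ E) ∧ (∀ z, L.getLast? = some z → z.1 ∈ R) := by
    intro n
    have hreach : Reach E (a n) (u n) := by
      match n with
      | 0 => exact h1 0
      | n + 1 => exact Relation.ReflTransGen.trans (h3 n) (h1 (n + 1))
    obtain ⟨L1, hch1, hmem1⟩ := chain_of_reach hreach
    obtain ⟨p, r, hr, σ, hw⟩ := h2 n
    refine ⟨L1 ++ [(r, p, σ)], by simp, chain_append hch1 ⟨_, hw, rfl⟩, ?_, ?_⟩
    · intro y hy
      rcases List.mem_append.1 hy with hy | hy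
      · exact Or.inr (hmem1 y hy)
      · simp at hy; subst hy; exact Or.inl hr
    · intro z hz
      rw [List.getLast?_concat] at hz
      rw [← Option.some_inj.1 hz]
      exact hr
  choose La hne hch hmem hlast using hblk
  obtain ⟨f, rl, pp, sb, hf0, hstep, hinf⟩ := flatten_deriv a La hne hch hmem hlast
  have hrule : ∀ n, (∀ y, (rl n).lhs ≠ Tm.var y) ∧
      (∀ x ∈ (rl n).rhs.varList, x ∈ (rl n).lhs.varList) ∧ (rl n).rhs.Flat := by
    intro n
    rcases (hstep n).1 with hr | hr
    · exact ⟨(hRwf _ hr).1, (hRwf _ hr).2, (hR _ hr).1⟩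
    · obtain ⟨hwf, _, _, _, hfl, _, _⟩ := hE.1 _ hr
      exact ⟨hwf.1, hwf.2, hfl⟩
  have hpst : ∀ n, PST R E (f n) := by
    intro n
    induction n with
    | zero =>
      rw [hf0]
      show PST R E (g 0)
      rw [hg0]
      exact hpst₀
    | succ n ih =>
      exact pst_preserved hconst (hstep n).1 (hrule n).1 (hrule n).2.1 (hrule n).2.2
        (hstep n).2 ih
  have hnts : ∀ n, NT R E (f n) := by
    intro n
    have hc := conv2 (R := R) (E := E) (fun m => f (n + m)) ?_ ?_
    · simpa using hc
    · intro m
      rcases (hstep (n + m)).1 with hr | hr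
      · exact Or.inr (Or.inr (rew_of_rewWith hr (hstep (n + m)).2))
      · exact Or.inr (Or.inl (rew_of_rewWith hr (hstep (n + m)).2))
    · intro N
      obtain ⟨k, hk, hkr⟩ := hinf (n + N)
      refine ⟨k - n, by omega, ?_⟩
      have e1 : n + (k - n) = k := by omega
      have e2 : n + (k - n + 1) = k + 1 := by omega
      show Rew R (f (n + (k - n))) (f (n + (k - n + 1)))
      rw [e1, e2]
      exact rew_of_rewWith hkr (hstep k).2
  refine ⟨f, rl, pp, sb, hstep, hinf, ?_, ?_, ?_⟩
  · -- (3) minimality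
    intro q w hq hsub
    apply hpst 0 q w hq hsub
  · -- (4) no collapsing at root
    rintro n hp ⟨x, hx⟩
    obtain ⟨hsub, hrep⟩ := (hstep n).2
    rw [hp] at hsub hrep
    simp only [Tm.subAt_nil, Option.some_inj] at hsub
    simp only [Tm.replAt_nil, Option.some_inj] at hrep
    have hx' : x ∈ (rl n).lhs.varList :=
      (hrule n).2.1 x (by rw [hx, Tm.varList_var]; simp)
    obtain ⟨q₀, hq₀ne, hq₀⟩ := subterm_pos (hrule n).1 hx' (sb n)
    have hterm : TerminatingFrom R E ((sb n) x) := by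
      apply hpst n q₀ _ hq₀ne
      rw [hsub]
      exact hq₀
    apply nt_iff.1 _ hterm
    have hnt1 := hnts (n + 1)
    rw [← hrep, hx, Tm.subst_var] at hnt1
    exact hnt1
  · -- (5) infinitely many root steps
    by_contra hcon
    push_neg at hcon
    obtain ⟨N, hN⟩ := hcon
    have hppne : ∀ n, N ≤ n → ∃ j p', pp n = j :: p' := by
      intro n hn
      cases hpp : pp n with
      | nil => exact absurd hpp (hN n hn)
      | cons j p => exact ⟨j, p, rfl⟩
    obtain ⟨j0, p0, hp0⟩ := hppne N le_rfl
    obtain ⟨g0, ts0, w0, w0', hfN, -, -, -⟩ := rewWith_shape (hp0 ▸ (hstep N).2)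
    set L0 := ts0.length with hL0
    have hTS : ∀ n, ∃ ts : List (Tm F V), f (N + n) = Tm.app g0 ts ∧ ts.length = L0 := by
      intro n
      induction n with
      | zero => exact ⟨ts0, hfN, rfl⟩
      | succ n ih =>
        obtain ⟨ts, hts, hlen⟩ := ih
        obtain ⟨j, p', hppn⟩ := hppne (N + n) (by omega)
        obtain ⟨g', ts', w1, w1', hs, hget, hrw, ht⟩ := rewWith_shape (hppn ▸ (hstep (N + n)).2)
        rw [hts] at hs
        injection hs with hg hts2
        subst hg; subst hts2
        exact ⟨ts.set j w1', ht, by rw [List.length_set]; exact hlen⟩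
    choose TS hTSf hTSlen using hTS
    have hstepTS : ∀ n, ∃ (j : ℕ) (p' : List ℕ) (w1 w1' : Tm F V), pp (N + n) = j :: p' ∧
        (TS n)[j]? = some w1 ∧
        RewWith (rl (N + n)).lhs (rl (N + n)).rhs p' (sb (N + n)) w1 w1' ∧
        TS (n + 1) = (TS n).set j w1' := by
      intro n
      obtain ⟨j, p', hppn⟩ := hppne (N + n) (by omega)
      obtain ⟨g', ts', w1, w1', hs, hget, hrw, ht⟩ := rewWith_shape (hppn ▸ (hstep (N + n)).2)
      rw [hTSf n] at hs
      injection hs with hg hts2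
      subst hg; subst hts2
      injection ((hTSf (n + 1)).symm.trans ht) with _ hts3
      exact ⟨j, p', w1, w1', hppn, hget, hrw, hts3⟩
    choose J P W W' hJ hW hRW hSet using hstepTS
    have hJlt : ∀ n, J n < L0 := by
      intro n
      have h4 := hW n
      obtain ⟨h5, -⟩ := List.getElem?_eq_some_iff.1 h4
      have h6 := hTSlen n
      omega
    obtain ⟨j, hjlt, hj⟩ := inf_pigeonhole (fun n => rl (N + n) ∈ R) J L0
      (fun n _ => hJlt n)
      (fun M => by
        obtain ⟨k, hk, hkr⟩ := hinf (N + M)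
        refine ⟨k - N, by omega, ?_⟩
        show rl (N + (k - N)) ∈ R
        rwa [show N + (k - N) = k by omega])
    set arg : ℕ → Tm F V := fun n => ((TS n)[j]?).getD (f 0) with harg
    have hargW : ∀ n, J n = j → arg n = W n ∧ arg (n + 1) = W' n := by
      intro n hJn
      constructor
      · show ((TS n)[j]?).getD (f 0) = W n
        rw [← hJn, hW n]; rfl
      · show ((TS (n + 1))[j]?).getD (f 0) = W' n
        rw [hSet n, hJn, List.getElem?_set_self (by rw [hTSlen n]; exact hjlt)]
        rfl
    have hargEq : ∀ n, J n ≠ j → arg (n + 1) = arg n := by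
      intro n hJn
      show ((TS (n + 1))[j]?).getD (f 0) = ((TS n)[j]?).getD (f 0)
      rw [hSet n, List.getElem?_set_ne hJn]
    have hH : ∀ n, arg (n + 1) = arg n ∨ Rew E (arg n) (arg (n + 1)) ∨
        Rew R (arg n) (arg (n + 1)) := by
      intro n
      by_cases hJn : J n = j
      · obtain ⟨e1, e2⟩ := hargW n hJn
        rcases (hstep (N + n)).1 with hr | hr
        · refine Or.inr (Or.inr ?_)
          rw [e1, e2]
          exact rew_of_rewWith hr (hRW n)
        · refine Or.inr (Or.inl ?_)
          rw [e1, e2]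
          exact rew_of_rewWith hr (hRW n)
      · exact Or.inl (hargEq n hJn)
    have hHR : ∀ M, ∃ n ≥ M, Rew R (arg n) (arg (n + 1)) := by
      intro M
      obtain ⟨n, hn, hQ, hJn⟩ := hj M
      obtain ⟨e1, e2⟩ := hargW n hJn
      refine ⟨n, hn, ?_⟩
      rw [e1, e2]
      exact rew_of_rewWith hQ (hRW n)
    have hntarg : NT R E (arg 0) := conv2 arg hH hHR
    have hsub0 : (f N).subAt [j] = some (arg 0) := by
      have h6 := hTSf 0
      rw [Nat.add_zero] at h6
      rw [h6, Tm.subAt_app_cons]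
      have hlen0 : j < (TS 0).length := by rw [hTSlen 0]; exact hjlt
      show _ = some (((TS 0)[j]?).getD (f 0))
      simp only [List.getElem?_eq_getElem hlen0, Option.bind_some, Tm.subAt_nil,
        Option.getD_some]
    exact nt_iff.1 hntarg (hpst N [j] (arg 0) (by simp) hsub0)
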